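/- If Dischinger's result holds locally in a ring R (i.e., every right strongly π-regular element of R is strongly π-regular), then it also holds in the corner ring eRe for every idempotent e ∈ R. -/
import Mathlib

/-- If every right strongly π-regular element of `R` is strongly π-regular,
then the same holds in the corner ring `eRe` for every idempotent `e`. -/
theorem stmt_2 {R : Type*} [Ring R] (e : R) (he : IsIdempotentElem e)
    (hR : ∀ a : R, (∃ (n : ℕ) (x : R), 0 < n ∧ a ^ n = a ^ (n + 1) * x) →
      ∃ (m : ℕ) (y : R), 0 < m ∧ a ^ m = y * a ^ (m + 1))
    (a : R) (ha : a = e * a * e)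
    (hright : ∃ (n : ℕ) (x : R), 0 < n ∧ x = e * x * e ∧ a ^ n = a ^ (n + 1) * x) :
    ∃ (m : ℕ) (y : R), 0 < m ∧ y = e * y * e ∧ a ^ m = y * a ^ (m + 1) := by
  obtain ⟨n, x, hn, hx, hxn⟩ := hright
  obtain ⟨m, y, hm, hy⟩ := hR a ⟨n, x, hn, hxn⟩
  have hea : e * a = a := by
    conv_lhs => rw [ha, ← mul_assoc, ← mul_assoc, he.eq]
    exact ha.symm
  have heam : ∀ k : ℕ, e * a ^ (k + 1) = a ^ (k + 1) := fun k => by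
    rw [pow_succ', ← mul_assoc, hea]
  refine ⟨m, e * y * e, hm, ?_, ?_⟩
  · conv_rhs => rw [← mul_assoc, ← mul_assoc, he.eq, mul_assoc, he.eq]
  · obtain ⟨k, rfl⟩ : ∃ k, m = k + 1 := ⟨m - 1, (Nat.succ_pred_eq_of_pos hm).symm⟩
    calc a ^ (k + 1) = e * a ^ (k + 1) := (heam k).symm
      _ = e * (y * a ^ (k + 1 + 1)) := by rw [hy]
      _ = e * y * (e * a ^ (k + 1 + 1)) := by rw [heam, mul_assoc]
      _ = e * y * e * a ^ (k + 1 + 1) := (mul_assoc _ _ _).symm
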